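/- Let X be a scheme of finite type over a Noetherian affine scheme S = Spec R. Then there exists a finitely generated R-subalgebra B ⊆ Γ(X, O_X) such that, denoting q : X → Spec B the induced morphism and σ_X : X → Spec Γ(X, O_X) the canonical morphism, for all x₁, x₂ ∈ X one has σ_X(x₁) = σ_X(x₂) if and only if q(x₁) = q(x₂). -/

import Mathlib

open CategoryTheory AlgebraicGeometry TopologicalSpace CategoryTheory.Limits Opposite

/-- A scheme of finite type (and quasi-compact) over the spectrum of a Noetherian ring has
Noetherian underlying topological space. -/
lemma aux_noetherianSpace {R : CommRingCat} [IsNoetherianRing R] {Y : Scheme}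
    (g : Y ⟶ Spec R) [LocallyOfFiniteType g] [QuasiCompact g] :
    NoetherianSpace Y := by
  have hln : IsLocallyNoetherian Y := by
    apply isLocallyNoetherian_of_affine_cover (S := fun U : Y.affineOpens => U)
      (iSup_affineOpens_eq_top Y)
    intro U
    haveI hU : IsAffine U.1.toScheme := U.2
    have hQ : RingHom.FiniteType ((U.1.ι ≫ g).appTop).hom :=
      HasRingHomProperty.appTop (P := @LocallyOfFiniteType) _
        (inferInstance : LocallyOfFiniteType (U.1.ι ≫ g))
    letI : Algebra Γ(Spec R, ⊤) Γ(U.1.toScheme, ⊤) := ((U.1.ι ≫ g).appTop).hom.toAlgebra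
    haveI hft : Algebra.FiniteType Γ(Spec R, ⊤) Γ(U.1.toScheme, ⊤) := hQ
    haveI : IsNoetherianRing Γ(Spec R, ⊤) :=
      isNoetherianRing_of_ringEquiv R (Scheme.ΓSpecIso R).symm.commRingCatIsoToRingEquiv
    haveI : IsNoetherianRing Γ(U.1.toScheme, ⊤) :=
      Algebra.FiniteType.isNoetherianRing Γ(Spec R, ⊤) Γ(U.1.toScheme, ⊤)
    exact isNoetherianRing_of_ringEquiv _ U.1.topIso.commRingCatIsoToRingEquiv
  have hcs : CompactSpace Y := by
    constructor
    have := QuasiCompact.isCompact_preimage (f := g) Set.univ isOpen_univ isCompact_univ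
    simpa using this
  have : IsNoetherian Y := ⟨⟩
  infer_instance

set_option maxHeartbeats 1000000 in
/-- Let `X` be a scheme of finite type over a Noetherian affine scheme
`Spec R`.  Then there is a finitely generated `R`-subalgebra `B ⊆ Γ(X, O_X)` such that the
induced morphism `q : X → Spec B` separates points exactly as well as the canonical morphism
`σ_X : X → Spec Γ(X, O_X)` does: `σ_X x₁ = σ_X x₂ ↔ q x₁ = q x₂`. -/
theorem stmt12 (R : CommRingCat) [IsNoetherianRing R] (X : Scheme) (f : X ⟶ Spec R)
    [LocallyOfFiniteType f] [QuasiCompact f] :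
    letI : Algebra R Γ(X, ⊤) :=
      RingHom.toAlgebra ((Scheme.ΓSpecIso R).inv ≫ Scheme.Hom.appTop f).hom
    ∃ B : Subalgebra R Γ(X, ⊤), B.FG ∧
      ∀ x₁ x₂ : X,
        ((Scheme.toSpecΓ X).base x₁ = (Scheme.toSpecΓ X).base x₂ ↔
          (Scheme.toSpecΓ X ≫ Spec.map (CommRingCat.ofHom B.val.toRingHom)).base x₁ =
          (Scheme.toSpecΓ X ≫ Spec.map (CommRingCat.ofHom B.val.toRingHom)).base x₂) := by
  letI : Algebra R Γ(X, ⊤) :=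
    RingHom.toAlgebra ((Scheme.ΓSpecIso R).inv ≫ Scheme.Hom.appTop f).hom
  let W : Scheme := pullback f f
  let π₁ : W ⟶ X := pullback.fst f f
  let π₂ : W ⟶ X := pullback.snd f f
  haveI : LocallyOfFiniteType π₁ := inferInstance
  haveI := aux_noetherianSpace (π₁ ≫ f)
  let d : Γ(X, ⊤) → Γ(W, ⊤) := fun h => π₁.appTop h - π₂.appTop h
  obtain ⟨t, ht⟩ :=
    (NoetherianSpace.isCompact (⋃ h, (W.basicOpen (d h) : Set W))).elim_finite_subcover
      (fun h => (W.basicOpen (d h) : Set W)) (fun h => (W.basicOpen (d h)).isOpen) le_rfl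
  refine ⟨Algebra.adjoin R (t : Set Γ(X, ⊤)), Subalgebra.fg_adjoin_finset t, fun x₁ x₂ => ?_⟩
  set B : Subalgebra R Γ(X, ⊤) := Algebra.adjoin R (t : Set Γ(X, ⊤)) with hB
  set ι : CommRingCat.of B ⟶ Γ(X, ⊤) := CommRingCat.ofHom B.val.toRingHom with hι
  set q : X ⟶ Spec (CommRingCat.of B) := X.toSpecΓ ≫ Spec.map ι with hq
  constructor
  · intro h
    rw [hq, Scheme.Hom.comp_apply, Scheme.Hom.comp_apply, h]
  · intro hqeq
    -- `f` factors through `q`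
    have hfq : q ≫ Spec.map (CommRingCat.ofHom (algebraMap R B)) = f := by
      rw [hq, Category.assoc, ← Spec.map_comp]
      have h2 : (CommRingCat.ofHom (algebraMap ↑R ↥B) ≫ ι) =
          ((Scheme.ΓSpecIso R).inv ≫ Scheme.Hom.appTop f) := by
        ext x
        show B.val (algebraMap ↑R ↥B x) = _
        rw [AlgHom.commutes]
        rfl
      rw [h2, Spec.map_comp, ← Scheme.toSpecΓ_naturality_assoc, ← SpecMap_ΓSpecIso_hom,
        ← Spec.map_comp, Iso.inv_hom_id, Spec.map_id]
      exact Category.comp_id f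
    -- a point of `pullback q q` above `(x₁, x₂)`
    obtain ⟨z', hz'₁, hz'₂⟩ := Scheme.Pullback.exists_preimage_pullback x₁ x₂ hqeq
    let ψ : pullback q q ⟶ W :=
      pullback.map q q f f (𝟙 X) (𝟙 X) (Spec.map (CommRingCat.ofHom (algebraMap R B)))
        (hfq.trans (Category.id_comp f).symm) (hfq.trans (Category.id_comp f).symm)
    set z : W := ψ.base z' with hzdef
    have hψ₁ : ψ ≫ π₁ = pullback.fst q q ≫ 𝟙 X := pullback.lift_fst _ _ _
    have hψ₂ : ψ ≫ π₂ = pullback.snd q q ≫ 𝟙 X := pullback.lift_snd _ _ _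
    have hz₁ : π₁.base z = x₁ := by
      rw [hzdef]
      have h := congrArg (fun m : pullback q q ⟶ X => m.base z') hψ₁
      simp only [Scheme.Hom.comp_apply, Scheme.Hom.id_base, TopCat.id_app, Category.comp_id] at h
      rw [h, hz'₁]
    have hz₂ : π₂.base z = x₂ := by
      rw [hzdef]
      have h := congrArg (fun m : pullback q q ⟶ X => m.base z') hψ₂
      simp only [Scheme.Hom.comp_apply, Scheme.Hom.id_base, TopCat.id_app, Category.comp_id] at h
      rw [h, hz'₂]
    -- `q.appTop` hits all of `B`
    have hqapp : ∀ b : B, q.appTop ((Scheme.ΓSpecIso (CommRingCat.of B)).inv b)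
        = (b : Γ(X, ⊤)) := by
      intro b
      rw [hq, Scheme.Hom.comp_appTop]
      show X.toSpecΓ.appTop ((Spec.map ι).appTop ((Scheme.ΓSpecIso (CommRingCat.of ↥B)).inv b))
        = (b : Γ(X, ⊤))
      have hnat := congrArg (fun φ : CommRingCat.of ↥B ⟶ Γ(Spec Γ(X, ⊤), ⊤) => φ b)
        (Scheme.ΓSpecIso_inv_naturality ι)
      have hnat' : (Scheme.ΓSpecIso Γ(X, ⊤)).inv (ι b) =
          (Spec.map ι).appTop ((Scheme.ΓSpecIso (CommRingCat.of ↥B)).inv b) := hnat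
      rw [← hnat', Scheme.toSpecΓ_appTop]
      exact Iso.inv_hom_id_apply _ _
    -- functions from `B` take equal values on the two projections of `pullback q q`
    have hsep : ∀ i ∈ t, (pullback.fst q q).appTop i = (pullback.snd q q).appTop i := by
      intro i hi
      have hiB : i ∈ B := Algebra.subset_adjoin hi
      have hc := congrArg (fun g : pullback q q ⟶ Spec (CommRingCat.of ↥B) =>
          g.appTop ((Scheme.ΓSpecIso (CommRingCat.of B)).inv ⟨i, hiB⟩))
        (pullback.condition (f := q) (g := q))
      have hc' : (pullback.fst q q).appTop
            (q.appTop ((Scheme.ΓSpecIso (CommRingCat.of B)).inv ⟨i, hiB⟩)) =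
          (pullback.snd q q).appTop
            (q.appTop ((Scheme.ΓSpecIso (CommRingCat.of B)).inv ⟨i, hiB⟩)) := hc
      rw [hqapp ⟨i, hiB⟩] at hc'
      exact hc'
    -- the point `z` lies in none of the `W.basicOpen (d h)`
    have hznot : ∀ h : Γ(X, ⊤), z ∉ W.basicOpen (d h) := by
      have hz_t : ∀ i ∈ t, z ∉ W.basicOpen (d i) := by
        intro i hi hmem
        have e1 : ψ.appTop (π₁.appTop i) = (pullback.fst q q).appTop i := by
          have h : ψ.appTop (π₁.appTop i) =
              (pullback.fst q q).appTop (Scheme.Hom.appTop (𝟙 X) i) :=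
            congrArg (fun g : pullback q q ⟶ X => g.appTop i) hψ₁
          rw [h, Scheme.Hom.id_appTop, CommRingCat.id_apply]
        have e2 : ψ.appTop (π₂.appTop i) = (pullback.snd q q).appTop i := by
          have h : ψ.appTop (π₂.appTop i) =
              (pullback.snd q q).appTop (Scheme.Hom.appTop (𝟙 X) i) :=
            congrArg (fun g : pullback q q ⟶ X => g.appTop i) hψ₂
          rw [h, Scheme.Hom.id_appTop, CommRingCat.id_apply]
        have h0 : ψ.appTop (d i) = 0 := by
          show ψ.appTop (π₁.appTop i - π₂.appTop i) = 0
          rw [map_sub, e1, e2, hsep i hi, sub_self]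
        rw [hzdef] at hmem
        have hmem' : z' ∈ ψ ⁻¹ᵁ W.basicOpen (d i) := hmem
        rw [Scheme.preimage_basicOpen_top, h0, Scheme.basicOpen_zero] at hmem'
        exact hmem'
      intro h hmem
      have hz : z ∈ ⋃ i ∈ t, (W.basicOpen (d i) : Set W) :=
        ht (Set.mem_iUnion.mpr ⟨h, hmem⟩)
      rw [Set.mem_iUnion₂] at hz
      obtain ⟨i, hi, hmem'⟩ := hz
      exact hz_t i hi hmem'
    -- equal residues everywhere
    have hval : ∀ h : Γ(X, ⊤),
        W.Γevaluation z (π₁.appTop h) = W.Γevaluation z (π₂.appTop h) := by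
      intro h
      have h0 : W.Γevaluation z (d h) = 0 :=
        (Scheme.evaluation_eq_zero_iff_notMem_basicOpen (U := ⊤) W z trivial (d h)).mpr
          (hznot h)
      have h1 : W.Γevaluation z (π₁.appTop h - π₂.appTop h) = 0 := h0
      rw [map_sub, sub_eq_zero] at h1
      exact h1
    -- membership in basic opens coincides
    have hbo : ∀ h : Γ(X, ⊤), (x₁ ∈ X.basicOpen h ↔ x₂ ∈ X.basicOpen h) := by
      intro h
      rw [← hz₁, ← hz₂,
        ← Scheme.evaluation_ne_zero_iff_mem_basicOpen (U := ⊤) X (π₁.base z) trivial h,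
        ← Scheme.evaluation_ne_zero_iff_mem_basicOpen (U := ⊤) X (π₂.base z) trivial h]
      have i1 : Function.Injective (π₁.residueFieldMap z) := (π₁.residueFieldMap z).hom.injective
      have i2 : Function.Injective (π₂.residueFieldMap z) := (π₂.residueFieldMap z).hom.injective
      rw [← map_ne_zero_iff _ i1, ← map_ne_zero_iff _ i2,
        Scheme.Γevaluation_naturality_apply, Scheme.Γevaluation_naturality_apply]
      have hch : W.Γevaluation z (π₁.appTop h) = W.Γevaluation z (π₂.appTop h) :=
        hval h
      rw [hch]
    -- conclude
    have key : ∀ (x : X) (h : Γ(X, ⊤)),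
        h ∈ (X.toSpecΓ.base x).asIdeal ↔ x ∉ X.basicOpen h := by
      intro x h
      have h1 : X.toSpecΓ.base x ∈ PrimeSpectrum.basicOpen h ↔ x ∈ X.basicOpen h := by
        conv_rhs => rw [← Scheme.toSpecΓ_preimage_basicOpen X h]
        rfl
      rw [← h1]
      exact ((not_congr (PrimeSpectrum.mem_basicOpen _ _)).trans not_not).symm
    apply PrimeSpectrum.ext
    apply Ideal.ext
    intro h
    rw [key, key, not_iff_not]
    exact hbo h
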